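/- A Polish group G is amenable if and only if every continuous action of G on a nonempty compact metrizable space admits an invariant Borel probability measure. -/

import Mathlib

set_option linter.unusedSectionVars false

open MeasureTheory BoundedContinuousFunction
open scoped ENNReal NNReal

/-- The right-hand side condition: invariant measures for actions on compact
metrizable spaces. -/
def InvOnMetrizable (G : Type) [Group G] [TopologicalSpace G] : Prop :=
  ∀ (X : Type) [TopologicalSpace X] [CompactSpace X]
    [TopologicalSpace.MetrizableSpace X] [Nonempty X] [MeasurableSpace X] [BorelSpace X],
    ∀ act : G → X → X,
      (∀ x, act 1 x = x) →
      (∀ g h x, act (g * h) x = act g (act h x)) →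
      (Continuous fun p : G × X => act p.1 p.2) →
      ∃ μ : Measure X, IsProbabilityMeasure μ ∧
        ∀ (g : G) (B : Set X), MeasurableSet B → μ (act g ⁻¹' B) = μ B

section Hard

variable {G : Type} [Group G] [TopologicalSpace G] [IsTopologicalGroup G] [PolishSpace G]
variable {X : Type} [TopologicalSpace X] [CompactSpace X] [T2Space X] [Nonempty X]

variable (act : G → X → X)

omit [Group G] [IsTopologicalGroup G] [PolishSpace G] [CompactSpace X] [T2Space X] [Nonempty X] in
/-- Continuity of the action of a single group element. -/
theorem act_cont (hc : Continuous fun p : G × X => act p.1 p.2) (g : G) :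
    Continuous (act g) :=
  hc.comp (continuous_const.prodMk continuous_id)

/-- The action of `g` as a continuous self-map of `X`. -/
noncomputable def actCM (hc : Continuous fun p : G × X => act p.1 p.2) (g : G) : C(X, X) :=
  ⟨act g, act_cont act hc g⟩

/-- Finite stage: a norm-one unital functional invariant at finitely many pairs. -/
theorem exists_partial_state (H : InvOnMetrizable G)
    (h1 : ∀ x, act 1 x = x)
    (hm : ∀ g h x, act (g * h) x = act g (act h x))
    (hc : Continuous fun p : G × X => act p.1 p.2)
    (s : Finset (G × C(X, ℝ))) :
    ∃ φ : C(X, ℝ) →L[ℝ] ℝ, ‖φ‖ ≤ 1 ∧ φ 1 = 1 ∧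
      ∀ p ∈ s, φ (p.2.comp (actCM act hc p.1)) = φ p.2 := by
  classical
  obtain ⟨D, Dcount, Ddense⟩ := TopologicalSpace.exists_countable_dense G
  haveI : Countable D := Dcount.to_subtype
  set F : Finset C(X, ℝ) := s.image Prod.snd with hF
  let ι : Type := {f // f ∈ F} × D
  let Φ : X → ι → ℝ := fun x i => i.1.1 (act i.2.1 x)
  have Φcont : Continuous Φ :=
    continuous_pi fun i => i.1.1.continuous.comp (act_cont act hc i.2.1)
  -- rigidity of fibers of Φ
  have rigid : ∀ x x', Φ x = Φ x' → ∀ (g : G), ∀ f ∈ F, f (act g x) = f (act g x') := by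
    intro x x' hxx g f hf
    have hcl : IsClosed {h : G | f (act h x) = f (act h x')} := by
      apply isClosed_eq
      · exact f.continuous.comp (hc.comp (continuous_id.prodMk continuous_const))
      · exact f.continuous.comp (hc.comp (continuous_id.prodMk continuous_const))
    have hD : D ⊆ {h : G | f (act h x) = f (act h x')} := by
      intro d hd
      exact congrFun hxx ⟨⟨f, hf⟩, ⟨d, hd⟩⟩
    have : closure D ⊆ {h : G | f (act h x) = f (act h x')} := closure_minimal hD hcl
    have hg : g ∈ closure D := by rw [Ddense.closure_eq]; trivial
    exact this hg
  -- the metrizable factor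
  let Y : Set (ι → ℝ) := Set.range Φ
  haveI : CompactSpace Y := isCompact_iff_compactSpace.mp (isCompact_range Φcont)
  haveI : Nonempty Y := (Set.range_nonempty Φ).to_subtype
  let π : X → Y := fun x => ⟨Φ x, Set.mem_range_self x⟩
  have πcont : Continuous π := Φcont.subtype_mk _
  have πsurj : Function.Surjective π := fun y => by
    obtain ⟨x, hx⟩ := y.2
    exact ⟨x, Subtype.ext hx⟩
  have πquot : Topology.IsQuotientMap π :=
    (πcont.isProperMap).isClosedMap.isQuotientMap πcont πsurj
  -- the action on the factor
  have key : ∀ (g : G) (x x' : X), π x = π x' → π (act g x) = π (act g x') := by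
    intro g x x' h
    apply Subtype.ext
    funext i
    show i.1.1 (act i.2.1 (act g x)) = i.1.1 (act i.2.1 (act g x'))
    rw [← hm, ← hm]
    exact rigid x x' (congrArg Subtype.val h) (i.2.1 * g) i.1.1 i.1.2
  let β : G → Y → Y := fun g y => π (act g (Function.surjInv πsurj y))
  have βπ : ∀ (g : G) (x : X), β g (π x) = π (act g x) :=
    fun g x => key g _ x (Function.surjInv_eq πsurj (π x))
  have βcont : Continuous fun p : G × Y => β p.1 p.2 := by
    have hq2 : Topology.IsQuotientMap (Prod.map (id : G → G) π) :=
      ((isProperMap_id).prodMap πcont.isProperMap).isClosedMap.isQuotientMap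
        (continuous_id.prodMap πcont) (Function.surjective_id.prodMap πsurj)
    rw [hq2.continuous_iff]
    have : ((fun p : G × Y => β p.1 p.2) ∘ Prod.map id π) = fun p : G × X => π (act p.1 p.2) := by
      funext p; exact βπ p.1 p.2
    rw [this]
    exact πcont.comp hc
  have β1 : ∀ y, β 1 y = y := by
    intro y; obtain ⟨x, rfl⟩ := πsurj y; rw [βπ, h1]
  have βm : ∀ g h y, β (g * h) y = β g (β h y) := by
    intro g h y; obtain ⟨x, rfl⟩ := πsurj y
    rw [βπ (g * h) x, hm, ← βπ g (act h x), ← βπ h x]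
  letI : MeasurableSpace Y := borel Y
  haveI : BorelSpace Y := ⟨rfl⟩
  obtain ⟨ν, νprob, νinv⟩ := H Y β β1 βm βcont
  -- descended continuous functions
  have descend : ∀ (f : C(X, ℝ)), f ∈ F → ∀ (g : G),
      ∃ h : C(Y, ℝ), ∀ x, h (π x) = f (act g x) := by
    intro f hf g
    let h0 : Y → ℝ := fun y => f (act g (Function.surjInv πsurj y))
    have hπ : ∀ x, h0 (π x) = f (act g x) := by
      intro x
      exact rigid _ x (congrArg Subtype.val (Function.surjInv_eq πsurj (π x))) g f hf
    have hcont : Continuous h0 := by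
      rw [πquot.continuous_iff]
      have : h0 ∘ π = fun x => f (act g x) := funext hπ
      rw [this]
      exact f.continuous.comp (act_cont act hc g)
    exact ⟨⟨h0, hcont⟩, hπ⟩
  -- the pullback linear map
  have integ : ∀ h : C(Y, ℝ), Integrable h ν := fun h =>
    h.continuous.integrable_of_hasCompactSupport (HasCompactSupport.of_compactSpace _)
  let T : C(Y, ℝ) →ₗ[ℝ] C(X, ℝ) :=
    { toFun := fun h => h.comp ⟨π, πcont⟩
      map_add' := fun h h' => rfl
      map_smul' := fun c h => rfl }
  have Tval : ∀ (h : C(Y, ℝ)) (x : X), T h x = h (π x) := fun h x => rfl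
  have Tinj : Function.Injective T := by
    intro h h' e
    ext y
    obtain ⟨x, rfl⟩ := πsurj y
    exact ContinuousMap.congr_fun e x
  have Tnorm : ∀ h : C(Y, ℝ), ‖T h‖ = ‖h‖ := by
    intro h
    apply le_antisymm
    · exact (ContinuousMap.norm_le _ (norm_nonneg h)).mpr fun x => h.norm_coe_le_norm (π x)
    · refine (ContinuousMap.norm_le _ (norm_nonneg (T h))).mpr fun y => ?_
      obtain ⟨x, rfl⟩ := πsurj y
      exact (T h).norm_coe_le_norm x
  let ψ : C(Y, ℝ) →ₗ[ℝ] ℝ :=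
    { toFun := fun h => ∫ y, h y ∂ν
      map_add' := fun h h' => integral_add (integ h) (integ h')
      map_smul' := fun c h => integral_smul c h }
  have ψbound : ∀ h : C(Y, ℝ), ‖ψ h‖ ≤ ‖h‖ := by
    intro h
    calc ‖∫ y, h y ∂ν‖ ≤ ‖h‖ * (ν Set.univ).toReal :=
          norm_integral_le_of_norm_le_const (Filter.Eventually.of_forall fun y => h.norm_coe_le_norm y)
    _ = ‖h‖ := by simp
  let p : Subspace ℝ C(X, ℝ) := LinearMap.range T
  let e : C(Y, ℝ) ≃ₗ[ℝ] p := LinearEquiv.ofInjective T Tinj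
  let φ₀ : p →ₗ[ℝ] ℝ := ψ ∘ₗ (e.symm : p →ₗ[ℝ] C(Y, ℝ))
  have φ₀bound : ∀ m : p, ‖φ₀ m‖ ≤ 1 * ‖(m : C(X, ℝ))‖ := by
    intro m
    have hTm : T (e.symm m) = (m : C(X, ℝ)) := by
      conv_rhs => rw [← e.apply_symm_apply m]
      exact (LinearEquiv.ofInjective_apply T (e.symm m) (h := Tinj)).symm ▸ rfl
    calc ‖ψ (e.symm m)‖ ≤ ‖e.symm m‖ := ψbound _
    _ = ‖T (e.symm m)‖ := (Tnorm _).symm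
    _ = 1 * ‖(m : C(X, ℝ))‖ := by rw [hTm, one_mul]
  let φM : p →L[ℝ] ℝ := LinearMap.mkContinuous φ₀ 1 φ₀bound
  obtain ⟨φ, hext, hnorm⟩ := exists_extension_norm_eq p φM
  have φT : ∀ h : C(Y, ℝ), φ (T h) = ∫ y, h y ∂ν := by
    intro h
    have hmem : T h ∈ p := ⟨h, rfl⟩
    have h1 : φ (T h) = φM ⟨T h, hmem⟩ := hext ⟨T h, hmem⟩
    have h2 : e.symm ⟨T h, hmem⟩ = h := by
      rw [LinearEquiv.symm_apply_eq]
      apply Subtype.ext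
      exact (LinearEquiv.ofInjective_apply T h (h := Tinj))
    rw [h1]
    show φ₀ ⟨T h, hmem⟩ = _
    show ψ (e.symm ⟨T h, hmem⟩) = _
    rw [h2]
    rfl
  refine ⟨φ, ?_, ?_, ?_⟩
  · rw [hnorm]
    exact LinearMap.mkContinuous_norm_le _ zero_le_one _
  · have hT1 : T 1 = 1 := rfl
    have := φT 1
    rw [hT1] at this
    rw [this]
    simp
  · rintro ⟨g, f⟩ hp
    have hfF : f ∈ F := Finset.mem_image_of_mem Prod.snd hp
    obtain ⟨hg, hgπ⟩ := descend f hfF g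
    obtain ⟨h1', h1π⟩ := descend f hfF 1
    have e1 : T hg = f.comp (actCM act hc g) := by
      ext x; exact hgπ x
    have e2 : T h1' = f := by
      ext x; rw [Tval, h1π, h1]
    -- measure preservation of β g
    have βgcont : Continuous (β g) := βcont.comp (continuous_const.prodMk continuous_id)
    have hmap : ν.map (β g) = ν := by
      apply Measure.ext
      intro B hB
      rw [Measure.map_apply βgcont.measurable hB]
      exact νinv g B hB
    have hcomp : ∀ y, hg y = h1' (β g y) := by
      intro y
      obtain ⟨x, rfl⟩ := πsurj y
      rw [hgπ, βπ, h1π, h1]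
    have : ∫ y, hg y ∂ν = ∫ y, h1' y ∂ν := by
      calc ∫ y, hg y ∂ν = ∫ y, h1' (β g y) ∂ν := by
            congr 1; funext y; exact hcomp y
      _ = ∫ y, h1' y ∂(ν.map (β g)) :=
            (integral_map βgcont.measurable.aemeasurable
              h1'.continuous.aestronglyMeasurable).symm
      _ = ∫ y, h1' y ∂ν := by rw [hmap]
    show φ (f.comp (actCM act hc g)) = φ f
    rw [← e1, ← e2, φT, φT, this]

/-- The global invariant state, via Banach–Alaoglu and the finite intersection property. -/
theorem exists_invariant_state (H : InvOnMetrizable G)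
    (h1 : ∀ x, act 1 x = x)
    (hm : ∀ g h x, act (g * h) x = act g (act h x))
    (hc : Continuous fun p : G × X => act p.1 p.2) :
    ∃ φ : C(X, ℝ) →L[ℝ] ℝ, ‖φ‖ ≤ 1 ∧ φ 1 = 1 ∧
      ∀ (g : G) (f : C(X, ℝ)), φ (f.comp (actCM act hc g)) = φ f := by
  let S : Set (WeakDual ℝ C(X, ℝ)) :=
    (WeakDual.toStrongDual ⁻¹' Metric.closedBall 0 1) ∩ {φ | φ (1 : C(X, ℝ)) = 1}
  have Scompact : IsCompact S :=
    (WeakDual.isCompact_closedBall (𝕜 := ℝ) 0 1).inter_right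
      (isClosed_eq (WeakDual.eval_continuous (1 : C(X, ℝ))) continuous_const)
  let Z : G × C(X, ℝ) → Set (WeakDual ℝ C(X, ℝ)) := fun p =>
    {φ | φ (p.2.comp (actCM act hc p.1)) = φ p.2}
  have Zclosed : ∀ p, IsClosed (Z p) := fun p =>
    isClosed_eq (WeakDual.eval_continuous _) (WeakDual.eval_continuous _)
  have FIP : ∀ u : Finset (G × C(X, ℝ)), (S ∩ ⋂ p ∈ u, Z p).Nonempty := by
    intro u
    obtain ⟨φ, hφ1, hφ2, hφ3⟩ := exists_partial_state act H h1 hm hc u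
    refine ⟨φ, ⟨?_, hφ2⟩, ?_⟩
    · exact (mem_closedBall_zero_iff (E := StrongDual ℝ C(X, ℝ)) (a := φ) (r := 1)).mpr hφ1
    · refine Set.mem_iInter₂.mpr ?_
      intro p hp
      exact hφ3 p hp
  have main : (S ∩ ⋂ p, Z p).Nonempty := by
    apply Scompact.inter_iInter_nonempty Z Zclosed
    intro u
    exact FIP u
  obtain ⟨φ, ⟨hball, hone⟩, hZ⟩ := main
  refine ⟨WeakDual.toStrongDual φ, ?_, hone, ?_⟩
  · calc ‖WeakDual.toStrongDual φ‖ = dist (WeakDual.toStrongDual φ) 0 := (dist_zero_right (WeakDual.toStrongDual φ)).symm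
    _ ≤ 1 := hball
  · intro g f
    have := Set.mem_iInter.mp hZ (g, f)
    exact this

open TopologicalSpace in
/-- Hard direction: from invariant measures on metrizable compacta to amenability. -/
theorem exists_invariant_regular_measure [MeasurableSpace X] [BorelSpace X]
    (H : InvOnMetrizable G)
    (h1 : ∀ x, act 1 x = x)
    (hm : ∀ g h x, act (g * h) x = act g (act h x))
    (hc : Continuous fun p : G × X => act p.1 p.2) :
    ∃ μ : Measure X, IsProbabilityMeasure μ ∧ μ.Regular ∧
      ∀ (g : G) (B : Set X), MeasurableSet B → μ (act g ⁻¹' B) = μ B := by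
  obtain ⟨φ, φnorm, φone, φinv⟩ := exists_invariant_state act H h1 hm hc
  have pos : ∀ f : C(X, ℝ), (∀ x, 0 ≤ f x) → 0 ≤ φ f := by
    intro f hf
    set t : ℝ := ‖f‖ with ht
    have hb : ‖f - t • 1‖ ≤ t := by
      refine (ContinuousMap.norm_le _ (norm_nonneg f)).mpr fun x => ?_
      have habs : |f x| ≤ t := f.norm_coe_le_norm x
      have hfx : (f - t • 1) x = f x - t := by simp
      rw [hfx, Real.norm_eq_abs, abs_le]
      exact ⟨by linarith [hf x], by linarith [(abs_le.mp habs).2, norm_nonneg f]⟩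
    have hφb : |φ (f - t • 1)| ≤ t := by
      calc |φ (f - t • 1)| ≤ ‖φ‖ * ‖f - t • 1‖ := φ.le_opNorm _
      _ ≤ 1 * t := mul_le_mul φnorm hb (norm_nonneg _) zero_le_one
      _ = t := one_mul t
    have heq : φ (f - t • 1) = φ f - t := by
      rw [map_sub, ContinuousLinearMap.map_smul, φone]; simp
    rw [heq] at hφb
    linarith [(abs_le.mp hφb).1]
  -- the ℝ≥0-valued functional
  let toR : (X →ᵇ NNReal) → C(X, ℝ) := fun f =>
    ⟨fun x => (f x : ℝ), NNReal.continuous_coe.comp f.continuous⟩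
  have toR_nonneg : ∀ (f : X →ᵇ NNReal) (x : X), 0 ≤ toR f x := fun f x => (f x).2
  let Λ : (X →ᵇ NNReal) →ₗ[NNReal] NNReal :=
    { toFun := fun f => ⟨φ (toR f), pos _ (toR_nonneg f)⟩
      map_add' := by
        intro f g
        apply Subtype.ext
        show φ (toR (f + g)) = φ (toR f) + φ (toR g)
        have : toR (f + g) = toR f + toR g := by
          ext x; show ((f x + g x : NNReal) : ℝ) = (f x : ℝ) + (g x : ℝ); push_cast; ring
        rw [this, map_add]
      map_smul' := by
        intro c f
        apply Subtype.ext
        show φ (toR (c • f)) = (c : ℝ) * φ (toR f)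
        have : toR (c • f) = (c : ℝ) • toR f := by
          ext x
          show ((c • f x : NNReal) : ℝ) = (c : ℝ) * (f x : ℝ)
          rfl
        rw [this, ContinuousLinearMap.map_smul, smul_eq_mul] }
  have Λval : ∀ f : X →ᵇ NNReal, (Λ f : ℝ) = φ (toR f) := fun f => rfl
  have Λcomp : ∀ (f : X →ᵇ NNReal) (g : G),
      Λ (f.compContinuous (actCM act hc g)) = Λ f := by
    intro f g
    apply Subtype.ext
    show φ (toR (f.compContinuous (actCM act hc g))) = φ (toR f)
    have : toR (f.compContinuous (actCM act hc g)) = (toR f).comp (actCM act hc g) := rfl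
    rw [this, φinv]
  have Λone : Λ 1 = 1 := by
    apply Subtype.ext
    show φ (toR 1) = 1
    have : toR 1 = (1 : C(X, ℝ)) := rfl
    rw [this, φone]
  let ΛC : CompactlySupportedContinuousMap X NNReal →ₗ[NNReal] NNReal :=
    { toFun := fun f => Λ f.toBoundedContinuousFunction
      map_add' := fun f g => map_add Λ f.toBoundedContinuousFunction g.toBoundedContinuousFunction
      map_smul' := fun c f => map_smul Λ c f.toBoundedContinuousFunction }
  -- additivity on disjoint compacts, via Urysohn
  have sup_disj : ∀ K₁ K₂ : Compacts X, Disjoint (K₁ : Set X) K₂ →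
      IsClosed (K₁ : Set X) → IsClosed (K₂ : Set X) →
      rieszContentAux ΛC (K₁ ⊔ K₂) = rieszContentAux ΛC K₁ + rieszContentAux ΛC K₂ := by
    intro K₁ K₂ hdisj hcl₁ hcl₂
    exact rieszContentAux_union ΛC hdisj
  let C : Content X :=
    { toFun := rieszContentAux ΛC
      mono' := fun K₁ K₂ h => rieszContentAux_mono ΛC h
      sup_disjoint' := sup_disj
      sup_le' := rieszContentAux_sup_le ΛC }
  -- invariance of the content
  have actinv : ∀ (g : G) (x : X), act g⁻¹ (act g x) = x := fun g x => by
    rw [← hm, inv_mul_cancel, h1]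
  have actinv' : ∀ (g : G) (x : X), act g (act g⁻¹ x) = x := fun g x => by
    rw [← hm, mul_inv_cancel, h1]
  let T : G → X ≃ₜ X := fun g =>
    { toFun := act g
      invFun := act g⁻¹
      left_inv := actinv g
      right_inv := actinv' g
      continuous_toFun := act_cont act hc g
      continuous_invFun := act_cont act hc g⁻¹ }
  have contentle : ∀ (g : G) (K : Compacts X),
      rieszContentAux ΛC (K.map (act g) (act_cont act hc g)) ≤ rieszContentAux ΛC K := by
    intro g K
    refine le_csInf (rieszContentAux_image_nonempty ΛC K) ?_
    rintro b ⟨f, hftest, rfl⟩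
    have hb : rieszContentAux ΛC (K.map (act g) (act_cont act hc g)) ≤
        ΛC (CompactlySupportedContinuousMap.continuousMapEquiv
          ((f : C(X, NNReal)).comp (actCM act hc g⁻¹))) := by
      apply rieszContentAux_le ΛC
      rintro x ⟨k, hk, rfl⟩
      show 1 ≤ f (act g⁻¹ (act g k))
      rw [actinv g k]
      exact hftest k hk
    exact hb.trans_eq (Λcomp f.toBoundedContinuousFunction g⁻¹)
  have contentinv : ∀ (g : G) (K : Compacts X),
      rieszContentAux ΛC (K.map (act g) (act_cont act hc g)) = rieszContentAux ΛC K := by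
    intro g K
    refine le_antisymm (contentle g K) ?_
    have h2 := contentle g⁻¹ (K.map (act g) (act_cont act hc g))
    have hKid : (K.map (act g) (act_cont act hc g)).map (act g⁻¹) (act_cont act hc g⁻¹) = K := by
      apply Compacts.ext
      show act g⁻¹ '' (act g '' (K : Set X)) = K
      rw [Set.image_image]
      simp only [actinv]
      exact Set.image_id _
    rwa [hKid] at h2
  -- the measure
  have univcontent : rieszContentAux ΛC ⟨Set.univ, isCompact_univ⟩ = 1 := by
    apply le_antisymm
    · have := rieszContentAux_le ΛC (K := ⟨Set.univ, isCompact_univ⟩)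
        (f := CompactlySupportedContinuousMap.continuousMapEquiv 1) (fun x _ => le_refl 1)
      exact this.trans_eq Λone
    · refine le_csInf (rieszContentAux_image_nonempty ΛC _) ?_
      rintro b ⟨f, hftest, rfl⟩
      have h0 : ∀ x : X, (0 : ℝ) ≤ (toR f.toBoundedContinuousFunction - 1) x := by
        intro x
        have := hftest x (Set.mem_univ x)
        have : (1 : ℝ) ≤ (f x : ℝ) := this
        exact sub_nonneg.mpr this
      have := pos _ h0
      rw [map_sub, φone] at this
      have h1 : (1 : ℝ) ≤ φ (toR f.toBoundedContinuousFunction) := by linarith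
      exact_mod_cast h1
  let μ : Measure X := C.measure
  have μuniv : μ Set.univ = 1 := by
    rw [Content.measure_apply _ MeasurableSet.univ]
    have houter : C.outerMeasure Set.univ = C.innerContent ⟨Set.univ, isOpen_univ⟩ :=
      C.outerMeasure_opens ⟨Set.univ, isOpen_univ⟩
    rw [houter]
    apply le_antisymm
    · refine iSup₂_le fun K _ => ?_
      have := C.mono K ⟨Set.univ, isCompact_univ⟩ (Set.subset_univ _)
      calc (C K : ℝ≥0∞) ≤ C ⟨Set.univ, isCompact_univ⟩ := this
      _ = 1 := by
        show ((rieszContentAux ΛC ⟨Set.univ, isCompact_univ⟩ : NNReal) : ℝ≥0∞) = 1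
        rw [univcontent]
        rfl
    · have := C.le_innerContent ⟨Set.univ, isCompact_univ⟩ ⟨Set.univ, isOpen_univ⟩
        subset_rfl
      calc (1 : ℝ≥0∞) = C ⟨Set.univ, isCompact_univ⟩ := by
            show (1 : ℝ≥0∞) = ((rieszContentAux ΛC ⟨Set.univ, isCompact_univ⟩ : NNReal) : ℝ≥0∞)
            rw [univcontent]
            rfl
      _ ≤ _ := this
  refine ⟨μ, ⟨μuniv⟩, C.regular, ?_⟩
  intro g B hB
  rw [Content.measure_apply _ (hB.preimage (act_cont act hc g).measurable),
    Content.measure_apply _ hB]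
  exact C.outerMeasure_preimage (T g)
    (fun K => congrArg (fun r : NNReal => (r : ℝ≥0∞)) (contentinv g K)) B

end Hard

/-- A topological group is amenable if every continuous action of it on a nonempty compact
Hausdorff space admits an invariant regular Borel probability measure. -/
def IsAmenableGroup (G : Type) [Group G] [TopologicalSpace G] : Prop :=
  ∀ (X : Type) [TopologicalSpace X] [CompactSpace X] [T2Space X] [Nonempty X]
    [MeasurableSpace X] [BorelSpace X],
    ∀ act : G → X → X,
      (∀ x, act 1 x = x) →
      (∀ g h x, act (g * h) x = act g (act h x)) →
      (Continuous fun p : G × X => act p.1 p.2) →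
      ∃ μ : Measure X, IsProbabilityMeasure μ ∧ μ.Regular ∧
        ∀ (g : G) (B : Set X), MeasurableSet B → μ (act g ⁻¹' B) = μ B

/-- A Polish group `G` is amenable iff every continuous action of `G` on a
nonempty compact metrizable space admits an invariant Borel probability measure. -/
theorem stmt_3 (G : Type) [Group G] [TopologicalSpace G] [IsTopologicalGroup G] [PolishSpace G] :
    IsAmenableGroup G ↔
    ∀ (X : Type) [TopologicalSpace X] [CompactSpace X]
      [TopologicalSpace.MetrizableSpace X] [Nonempty X] [MeasurableSpace X] [BorelSpace X],
      ∀ act : G → X → X,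
        (∀ x, act 1 x = x) →
        (∀ g h x, act (g * h) x = act g (act h x)) →
        (Continuous fun p : G × X => act p.1 p.2) →
        ∃ μ : Measure X, IsProbabilityMeasure μ ∧
          ∀ (g : G) (B : Set X), MeasurableSet B → μ (act g ⁻¹' B) = μ B := by
  constructor
  · intro hA X _ _ _ _ _ _ act h1 hm hc
    obtain ⟨μ, hprob, _, hinv⟩ := hA X act h1 hm hc
    exact ⟨μ, hprob, hinv⟩
  · intro H X _ _ _ _ _ _ act h1 hm hc
    exact exists_invariant_regular_measure act H h1 hm hc
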